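/- Let j < d and let I = {i_1 < ⋯ < i_r} ⊆ {j+1,…,d}. Define, for x = [x_0 : ⋯ : x_d] in projective d-space over a nonarchimedean field, the sets V(j+1;ε) = {x : |x_{j+1}| > |x_l|·ε for all l < j+1} and, for k > j+1, V(k;ε) = {x : |x_k| > |x_l|·ε for all l < j+1 and |x_k| > |x_l| for all j+1 ≤ l < k}. Then the map sending [x_0:⋯:x_d] to the tuple (y_0,…,y_{d-1}) with y_i = x_i/x_{i_m} where i_m is the smallest element of I exceeding i (and y_i = x_i/x_{i_r} for i > i_r) is a bijection from ∩_{k∈I} V(k;ε) onto B^-(1/ε)^{j+1} × B^-(1)^{i_1−1−j} × ∏_{m=2}^{r} ( C^-(0,1) × B^-(1)^{i_m − i_{m−1} − 1} ) × 𝔸^{d − i_r}, where B^-(δ) = {z : |z| < δ}, C^-(0,1) = {z : 0 < |z| < 1}, and 𝔸 denotes the affine line. -/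
import Mathlib


namespace Stmt4

variable {K : Type*} [NormedField K]

/-- The set `V(k;ε)` in homogeneous coordinates:
`|x_k| > ε·|x_l|` for all `l ≤ j`, and `|x_k| > |x_l|` for all `j+1 ≤ l < k`
(for `k = j+1` the second condition is vacuous, recovering `V(j+1;ε)`). -/
def Vset (K : Type*) [NormedField K] (d j : ℕ) (ε : ℝ) (k : Fin (d + 1)) :
    Set (Fin (d + 1) → K) :=
  {x | (∀ l : Fin (d + 1), (l : ℕ) ≤ j → ε * ‖x l‖ < ‖x k‖) ∧
       (∀ l : Fin (d + 1), j < (l : ℕ) → (l : ℕ) < (k : ℕ) → ‖x l‖ < ‖x k‖)}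

/-- The intersection `⋂_{k ∈ I} V(k;ε)` for `I = {ι 0 < ⋯ < ι (r-1)}`. -/
def Sset (K : Type*) [NormedField K] (d j r : ℕ) (ε : ℝ)
    (ι : Fin r → Fin (d + 1)) : Set (Fin (d + 1) → K) :=
  ⋂ m : Fin r, Vset K d j ε (ι m)

/-- `σ i` = the smallest element `i_m` of `I` exceeding `i` (and `i_r` if there is
none). -/
noncomputable def sig (d r : ℕ) (ι : Fin r → Fin (d + 1)) (hr : 0 < r)
    (i : Fin (d + 1)) : Fin (d + 1) :=
  if h : ∃ m : Fin r, (i : ℕ) < ((ι m : Fin (d + 1)) : ℕ) then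
    ι ((Finset.univ.filter (fun m : Fin r => (i : ℕ) < ((ι m : Fin (d + 1)) : ℕ))).min'
      (by obtain ⟨m, hm⟩ := h
          exact ⟨m, Finset.mem_filter.mpr ⟨Finset.mem_univ m, hm⟩⟩))
  else ι ⟨r - 1, by omega⟩

/-- The coordinate map `ψ(x)_i = x_i / x_{σ(i)}` of Lemma 1.5. -/
noncomputable def psi (d r : ℕ) (ι : Fin r → Fin (d + 1)) (hr : 0 < r)
    (x : Fin (d + 1) → K) : Fin (d + 1) → K :=
  fun i => x i / x (sig d r ι hr i)

/-- The target: `B⁻(1/ε)^{j+1} × B⁻(1)^{i₁-1-j} × ∏_{m=2}^r (C⁻(0,1) × B⁻(1)^{i_m-i_{m-1}-1}) × 𝔸^{d-i_r}`,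
realized inside `K^{d+1}` by normalizing the coordinate at `i_r` to `1`. -/
def Tset (K : Type*) [NormedField K] (d j r : ℕ) (ε : ℝ)
    (ι : Fin r → Fin (d + 1)) (hr : 0 < r) : Set (Fin (d + 1) → K) :=
  {y | y (ι ⟨r - 1, by omega⟩) = 1 ∧
    (∀ i : Fin (d + 1), (i : ℕ) ≤ j → ‖y i‖ < 1 / ε) ∧
    (∀ i : Fin (d + 1), j < (i : ℕ) → (i : ℕ) < ((ι ⟨0, hr⟩ : Fin (d + 1)) : ℕ) →
      ‖y i‖ < 1) ∧
    (∀ m : ℕ, ∀ hm : m + 1 < r,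
      (0 < ‖y (ι ⟨m, by omega⟩)‖ ∧ ‖y (ι ⟨m, by omega⟩)‖ < 1) ∧
      ∀ i : Fin (d + 1), ((ι ⟨m, by omega⟩ : Fin (d + 1)) : ℕ) < (i : ℕ) →
        (i : ℕ) < ((ι ⟨m + 1, hm⟩ : Fin (d + 1)) : ℕ) → ‖y i‖ < 1)}

section Aux

variable {d j r : ℕ} {ε : ℝ} {ι : Fin r → Fin (d + 1)}

/-- The index version of `sig`. -/
noncomputable def Nidx (d r : ℕ) (ι : Fin r → Fin (d + 1)) (hr : 0 < r)
    (i : Fin (d + 1)) : Fin r :=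
  if h : ∃ m : Fin r, (i : ℕ) < ((ι m : Fin (d + 1)) : ℕ) then
    ((Finset.univ.filter (fun m : Fin r => (i : ℕ) < ((ι m : Fin (d + 1)) : ℕ))).min'
      (by obtain ⟨m, hm⟩ := h
          exact ⟨m, Finset.mem_filter.mpr ⟨Finset.mem_univ m, hm⟩⟩))
  else ⟨r - 1, by omega⟩

lemma sig_eq_Nidx (hr : 0 < r) (i : Fin (d + 1)) :
    sig d r ι hr i = ι (Nidx d r ι hr i) := by
  unfold sig Nidx
  split <;> rfl

lemma Nidx_eq (hr : 0 < r) (i : Fin (d + 1)) (m : Fin r)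
    (h1 : (i : ℕ) < ((ι m : Fin (d + 1)) : ℕ))
    (h2 : ∀ m' : Fin r, m' < m → ((ι m' : Fin (d + 1)) : ℕ) ≤ (i : ℕ)) :
    Nidx d r ι hr i = m := by
  have h : ∃ m : Fin r, (i : ℕ) < ((ι m : Fin (d + 1)) : ℕ) := ⟨m, h1⟩
  unfold Nidx
  rw [dif_pos h]
  have hmem : m ∈ Finset.univ.filter (fun m : Fin r => (i : ℕ) < ((ι m : Fin (d + 1)) : ℕ)) :=
    Finset.mem_filter.mpr ⟨Finset.mem_univ m, h1⟩
  have hne : (Finset.univ.filter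
      (fun m : Fin r => (i : ℕ) < ((ι m : Fin (d + 1)) : ℕ))).Nonempty := ⟨m, hmem⟩
  have hmin := (Finset.mem_filter.mp (Finset.min'_mem _ hne)).2
  refine le_antisymm (Finset.min'_le _ m hmem) ?_
  by_contra hlt
  push_neg at hlt
  exact absurd (h2 _ hlt) (not_le.mpr hmin)

lemma Nidx_last (hr : 0 < r) (hmono : StrictMono ι) (i : Fin (d + 1))
    (h : ((ι ⟨r - 1, by omega⟩ : Fin (d + 1)) : ℕ) ≤ (i : ℕ)) :
    Nidx d r ι hr i = ⟨r - 1, by omega⟩ := by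
  unfold Nidx
  rw [dif_neg]
  push_neg
  intro m
  have hle : ι m ≤ ι ⟨r - 1, by omega⟩ :=
    hmono.monotone (Fin.le_def.mpr (by have := m.isLt; simp; omega))
  exact le_trans (Fin.le_def.mp hle) h

lemma Nidx_le (hr : 0 < r) (i : Fin (d + 1)) (m : Fin r)
    (h : (i : ℕ) < ((ι m : Fin (d + 1)) : ℕ)) :
    Nidx d r ι hr i ≤ m := by
  unfold Nidx
  rw [dif_pos ⟨m, h⟩]
  exact Finset.min'_le _ m (Finset.mem_filter.mpr ⟨Finset.mem_univ m, h⟩)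

lemma Nidx_zero (hr : 0 < r) (i : Fin (d + 1))
    (h : (i : ℕ) < ((ι ⟨0, hr⟩ : Fin (d + 1)) : ℕ)) :
    Nidx d r ι hr i = ⟨0, hr⟩ := by
  refine Nidx_eq hr i _ h ?_
  intro m' hm'
  exact absurd (Fin.lt_def.mp hm') (by simp)

lemma Nidx_succ (hr : 0 < r) (hmono : StrictMono ι) (i : Fin (d + 1)) (m : ℕ)
    (hm : m + 1 < r)
    (h1 : ((ι ⟨m, by omega⟩ : Fin (d + 1)) : ℕ) ≤ (i : ℕ))
    (h2 : (i : ℕ) < ((ι ⟨m + 1, hm⟩ : Fin (d + 1)) : ℕ)) :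
    Nidx d r ι hr i = ⟨m + 1, hm⟩ := by
  refine Nidx_eq hr i _ h2 ?_
  intro m' hm'
  have hle : ι m' ≤ ι ⟨m, by omega⟩ :=
    hmono.monotone (Fin.le_def.mpr (by have := Fin.lt_def.mp hm'; simp at this ⊢; omega))
  exact le_trans (Fin.le_def.mp hle) h1

lemma Sset_norm_pos (hε : 0 < ε) {x : Fin (d + 1) → K}
    (hx : x ∈ Sset K d j r ε ι) (m : Fin r) : 0 < ‖x (ι m)‖ := by
  have hm := Set.mem_iInter.mp hx m
  have h1 := hm.1 ⟨0, by omega⟩ (Nat.zero_le j)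
  have h0 : 0 ≤ ε * ‖x ⟨0, by omega⟩‖ := by positivity
  linarith

lemma Sset_ne (hε : 0 < ε) {x : Fin (d + 1) → K}
    (hx : x ∈ Sset K d j r ε ι) (m : Fin r) : x (ι m) ≠ 0 :=
  norm_pos_iff.mp (Sset_norm_pos hε hx m)

/-- `z n = y (ι n)` (and `1` out of range). -/
def zfun (d r : ℕ) (ι : Fin r → Fin (d + 1)) (y : Fin (d + 1) → K) : ℕ → K :=
  fun n => if h : n < r then y (ι ⟨n, h⟩) else 1

/-- `P n = ∏_{n ≤ m < r-1} z m`, the value of the inverse at `ι n`. -/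
def Pfun (d r : ℕ) (ι : Fin r → Fin (d + 1)) (y : Fin (d + 1) → K) : ℕ → K :=
  fun n => ∏ m' ∈ Finset.Ico n (r - 1), zfun d r ι y m'

lemma zfun_norm (hr : 0 < r) {y : Fin (d + 1) → K}
    (hy : y ∈ Tset K d j r ε ι hr) (n : ℕ) :
    0 < ‖zfun d r ι y n‖ ∧ ‖zfun d r ι y n‖ ≤ 1 := by
  unfold zfun
  by_cases h : n < r
  · rw [dif_pos h]
    by_cases h2 : n + 1 < r
    · have h3 : 0 < ‖y (ι ⟨n, h⟩)‖ ∧ ‖y (ι ⟨n, h⟩)‖ < 1 := (hy.2.2.2 n h2).1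
      exact ⟨h3.1, le_of_lt h3.2⟩
    · have hn : n = r - 1 := by omega
      subst hn
      have h3 : y (ι ⟨r - 1, h⟩) = 1 := hy.1
      rw [h3]
      simp
  · rw [dif_neg h]; simp

lemma zfun_lt_one (hr : 0 < r) {y : Fin (d + 1) → K}
    (hy : y ∈ Tset K d j r ε ι hr) (n : ℕ) (hn : n + 1 < r) :
    ‖zfun d r ι y n‖ < 1 := by
  unfold zfun
  rw [dif_pos (by omega : n < r)]
  exact (hy.2.2.2 n hn).1.2

lemma Pfun_succ {y : Fin (d + 1) → K} {n : ℕ} (hn : n < r - 1) :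
    Pfun d r ι y n = zfun d r ι y n * Pfun d r ι y (n + 1) :=
  Finset.prod_eq_prod_Ico_succ_bot hn _

lemma Pfun_of_ge {y : Fin (d + 1) → K} {n : ℕ} (hn : r - 1 ≤ n) :
    Pfun d r ι y n = 1 := by
  unfold Pfun
  rw [Finset.Ico_eq_empty (by omega), Finset.prod_empty]

lemma Pfun_pos (hr : 0 < r) {y : Fin (d + 1) → K}
    (hy : y ∈ Tset K d j r ε ι hr) (n : ℕ) : 0 < ‖Pfun d r ι y n‖ := by
  unfold Pfun
  rw [norm_prod]
  exact Finset.prod_pos fun m' _ => (zfun_norm hr hy m').1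

lemma Pfun_ne (hr : 0 < r) {y : Fin (d + 1) → K}
    (hy : y ∈ Tset K d j r ε ι hr) (n : ℕ) : Pfun d r ι y n ≠ 0 :=
  norm_pos_iff.mp (Pfun_pos hr hy n)

lemma Pfun_mono (hr : 0 < r) {y : Fin (d + 1) → K}
    (hy : y ∈ Tset K d j r ε ι hr) : Monotone (fun n => ‖Pfun d r ι y n‖) := by
  apply monotone_nat_of_le_succ
  intro n
  by_cases h : n < r - 1
  · rw [Pfun_succ h, norm_mul]
    calc ‖zfun d r ι y n‖ * ‖Pfun d r ι y (n + 1)‖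
        ≤ 1 * ‖Pfun d r ι y (n + 1)‖ :=
          mul_le_mul_of_nonneg_right (zfun_norm hr hy n).2 (norm_nonneg _)
      _ = ‖Pfun d r ι y (n + 1)‖ := one_mul _
  · rw [Pfun_of_ge (by omega), Pfun_of_ge (by omega)]

/-- Every coordinate of `y ∈ Tset` strictly between `j` and `ι (r-1)` has norm `< 1`. -/
lemma Tset_norm_lt_one (hr : 0 < r) (hmono : StrictMono ι) {y : Fin (d + 1) → K}
    (hy : y ∈ Tset K d j r ε ι hr) (i : Fin (d + 1)) (h1 : j < (i : ℕ))
    (h2 : (i : ℕ) < ((ι ⟨r - 1, by omega⟩ : Fin (d + 1)) : ℕ)) : ‖y i‖ < 1 := by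
  by_cases h0 : (i : ℕ) < ((ι ⟨0, hr⟩ : Fin (d + 1)) : ℕ)
  · exact hy.2.2.1 i h1 h0
  push_neg at h0
  have key : ∀ n : ℕ, ∀ m : Fin r, (m : ℕ) + n = r - 1 →
      ((ι m : Fin (d + 1)) : ℕ) ≤ (i : ℕ) → ‖y i‖ < 1 := by
    intro n
    induction n with
    | zero =>
      intro m hmn hle
      have hm' : m = ⟨r - 1, by omega⟩ := Fin.val_injective (by simpa using hmn)
      rw [hm'] at hle
      exact absurd h2 (not_lt.mpr hle)
    | succ n ih =>
      intro m hmn hle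
      have hm1 : (m : ℕ) + 1 < r := by have := m.isLt; omega
      by_cases hnext : (i : ℕ) < ((ι ⟨(m : ℕ) + 1, hm1⟩ : Fin (d + 1)) : ℕ)
      · rcases eq_or_lt_of_le hle with heq | hlt
        · have hiota : ι m = i := Fin.val_injective heq
          have h4 : ‖y (ι m)‖ < 1 := (hy.2.2.2 (m : ℕ) hm1).1.2
          rwa [hiota] at h4
        · exact (hy.2.2.2 (m : ℕ) hm1).2 i hlt hnext
      · push_neg at hnext
        exact ih ⟨(m : ℕ) + 1, hm1⟩ (by show (m : ℕ) + 1 + n = r - 1; omega) hnext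
  exact key (r - 1) ⟨0, hr⟩ (by show 0 + (r - 1) = r - 1; omega) h0

lemma ratio (hε : 0 < ε) (hr : 0 < r) (hmono : StrictMono ι)
    {x x' : Fin (d + 1) → K} (hx : x ∈ Sset K d j r ε ι) (hx' : x' ∈ Sset K d j r ε ι)
    (hpsi : psi d r ι hr x = psi d r ι hr x') (m : Fin r) :
    x (ι m) * x' (ι ⟨r - 1, by omega⟩) = x' (ι m) * x (ι ⟨r - 1, by omega⟩) := by
  have hne : ∀ m : Fin r, x (ι m) ≠ 0 := Sset_ne hε hx
  have hne' : ∀ m : Fin r, x' (ι m) ≠ 0 := Sset_ne hε hx'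
  suffices H : ∀ k : ℕ, ∀ m : Fin r, r - 1 - (m : ℕ) ≤ k →
      x (ι m) * x' (ι ⟨r - 1, by omega⟩) = x' (ι m) * x (ι ⟨r - 1, by omega⟩) from
    H (r - 1) m (by omega)
  intro k
  induction k with
  | zero =>
    intro m hm
    have hm' : m = ⟨r - 1, by omega⟩ := Fin.val_injective (by have := m.isLt; simp; omega)
    rw [hm']
    exact mul_comm _ _
  | succ k ih =>
    intro m hm
    by_cases hlast : (m : ℕ) = r - 1
    · have hm' : m = ⟨r - 1, by omega⟩ := Fin.val_injective (by simpa using hlast)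
      rw [hm']
      exact mul_comm _ _
    · have hm1 : (m : ℕ) + 1 < r := by have := m.isLt; omega
      have hsig : sig d r ι hr (ι m) = ι ⟨(m : ℕ) + 1, hm1⟩ := by
        rw [sig_eq_Nidx]
        congr 1
        refine Nidx_eq hr _ _ ?_ ?_
        · exact Fin.lt_def.mp (hmono (Fin.lt_def.mpr (by show (m : ℕ) < (m : ℕ) + 1; omega)))
        · intro m' hm'
          have hle : ι m' ≤ ι m := hmono.monotone (Fin.le_def.mpr (by
            have := Fin.lt_def.mp hm'
            simp at this
            omega))
          exact Fin.le_def.mp hle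
      have hA := congrFun hpsi (ι m)
      simp only [psi, hsig] at hA
      rw [div_eq_div_iff (hne ⟨(m : ℕ) + 1, hm1⟩) (hne' ⟨(m : ℕ) + 1, hm1⟩)] at hA
      have hB := ih ⟨(m : ℕ) + 1, hm1⟩ (by show r - 1 - ((m : ℕ) + 1) ≤ k; omega)
      apply mul_left_cancel₀
        (mul_ne_zero (hne ⟨(m : ℕ) + 1, hm1⟩) (hne' ⟨(m : ℕ) + 1, hm1⟩))
      linear_combination x' (ι ⟨r - 1, by omega⟩) * x (ι ⟨(m : ℕ) + 1, hm1⟩) * hA +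
        x' (ι m) * x (ι ⟨(m : ℕ) + 1, hm1⟩) * hB

end Aux

/-- (Lemma 1.5.) For `I = {i₁ < ⋯ < i_r} ⊆ {j+1,…,d}` the map `ψ`
induces a bijection from `⋂_{k∈I} V(k;ε)` modulo scaling onto
`B⁻(1/ε)^{j+1} × B⁻(1)^{i₁-1-j} × ∏_{m=2}^r (C⁻(0,1) × B⁻(1)^{i_m-i_{m-1}-1}) × 𝔸^{d-i_r}`:
`ψ` maps the source into the target, is onto the target, and identifies exactly
the points differing by a scalar. -/
theorem stmt_4 (d j r : ℕ) (ε : ℝ) (hε : 0 < ε) (hjd : j + 1 ≤ d)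
    (ι : Fin r → Fin (d + 1)) (hr : 0 < r) (hmono : StrictMono ι)
    (hι0 : j + 1 ≤ ((ι ⟨0, hr⟩ : Fin (d + 1)) : ℕ)) :
    (∀ x ∈ Sset K d j r ε ι, psi d r ι hr x ∈ Tset K d j r ε ι hr) ∧
    (∀ y ∈ Tset K d j r ε ι hr, ∃ x ∈ Sset K d j r ε ι, psi d r ι hr x = y) ∧
    (∀ x ∈ Sset K d j r ε ι, ∀ x' ∈ Sset K d j r ε ι,
      (psi d r ι hr x = psi d r ι hr x' ↔ ∃ c : K, c ≠ 0 ∧ x' = c • x)) := by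

  refine ⟨?_, ?_, ?_⟩
  · -- Part 1: ψ maps Sset into Tset
    intro x hx
    have hxm : ∀ m : Fin r, x ∈ Vset K d j ε (ι m) := fun m => Set.mem_iInter.mp hx m
    have hp := Sset_norm_pos hε hx
    have hn := Sset_ne hε hx
    simp only [Tset, Set.mem_setOf_eq]
    refine ⟨?_, ?_, ?_, ?_⟩
    · simp only [psi]
      rw [sig_eq_Nidx, Nidx_last hr hmono _ le_rfl]
      exact div_self (hn _)
    · intro i hij
      simp only [psi]
      rw [sig_eq_Nidx, Nidx_zero hr i (by omega), norm_div,
        div_lt_div_iff₀ (hp ⟨0, hr⟩) hε]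
      have h1 := (hxm ⟨0, hr⟩).1 i hij
      nlinarith [h1]
    · intro i hji hi0
      simp only [psi]
      rw [sig_eq_Nidx, Nidx_zero hr i hi0, norm_div, div_lt_one (hp ⟨0, hr⟩)]
      exact (hxm ⟨0, hr⟩).2 i hji hi0
    · intro m hm
      have hjm : j < ((ι ⟨m, by omega⟩ : Fin (d + 1)) : ℕ) := by
        have h0m : ι ⟨0, hr⟩ ≤ ι ⟨m, by omega⟩ :=
          hmono.monotone (Fin.le_def.mpr (Nat.zero_le _))
        have := Fin.le_def.mp h0m
        omega
      have hmlt : ((ι ⟨m, by omega⟩ : Fin (d + 1)) : ℕ) <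
          ((ι ⟨m + 1, hm⟩ : Fin (d + 1)) : ℕ) :=
        Fin.lt_def.mp (hmono (Fin.lt_def.mpr (by show m < m + 1; omega)))
      have hsig : sig d r ι hr (ι ⟨m, by omega⟩) = ι ⟨m + 1, hm⟩ := by
        rw [sig_eq_Nidx]
        congr 1
        exact Nidx_succ hr hmono _ m hm le_rfl hmlt
      refine ⟨⟨?_, ?_⟩, ?_⟩
      · simp only [psi]
        rw [hsig, norm_div]
        exact div_pos (hp ⟨m, by omega⟩) (hp ⟨m + 1, hm⟩)
      · simp only [psi]
        rw [hsig, norm_div, div_lt_one (hp ⟨m + 1, hm⟩)]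
        exact (hxm ⟨m + 1, hm⟩).2 (ι ⟨m, by omega⟩) hjm hmlt
      · intro i h1 h2
        have hsig2 : sig d r ι hr i = ι ⟨m + 1, hm⟩ := by
          rw [sig_eq_Nidx]
          congr 1
          exact Nidx_succ hr hmono i m hm (le_of_lt h1) h2
        simp only [psi]
        rw [hsig2, norm_div, div_lt_one (hp ⟨m + 1, hm⟩)]
        exact (hxm ⟨m + 1, hm⟩).2 i (lt_trans hjm h1) h2
  · -- Part 2: ψ is onto Tset
    intro y hy
    have hPpos := Pfun_pos hr hy
    have hPne := Pfun_ne hr hy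
    have hPmono := Pfun_mono hr hy
    set x : Fin (d + 1) → K :=
      fun i => y i * Pfun d r ι y ((Nidx d r ι hr i : Fin r) : ℕ) with hxdef
    have hxapp : ∀ i, x i = y i * Pfun d r ι y ((Nidx d r ι hr i : Fin r) : ℕ) :=
      fun i => rfl
    have hxι : ∀ m : Fin r, x (ι m) = Pfun d r ι y (m : ℕ) := by
      intro m
      by_cases hl : (m : ℕ) = r - 1
      · have hm' : m = ⟨r - 1, by omega⟩ := Fin.val_injective (by simpa using hl)
        rw [hxapp, hm', Nidx_last hr hmono _ le_rfl]
        have h1 : y (ι ⟨r - 1, by omega⟩) = 1 := hy.1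
        rw [h1, one_mul]
      · have hm1 : (m : ℕ) + 1 < r := by have := m.isLt; omega
        have hmlt : ((ι m : Fin (d + 1)) : ℕ) < ((ι ⟨(m : ℕ) + 1, hm1⟩ : Fin (d + 1)) : ℕ) :=
          Fin.lt_def.mp (hmono (Fin.lt_def.mpr (by show (m : ℕ) < (m : ℕ) + 1; omega)))
        have hN : Nidx d r ι hr (ι m) = ⟨(m : ℕ) + 1, hm1⟩ := by
          refine Nidx_eq hr _ _ hmlt ?_
          intro m' hm'
          exact Fin.le_def.mp (hmono.monotone (Fin.le_def.mpr (by
            have := Fin.lt_def.mp hm'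
            simp at this
            omega)))
        rw [hxapp, hN]
        show y (ι m) * Pfun d r ι y ((m : ℕ) + 1) = Pfun d r ι y (m : ℕ)
        rw [Pfun_succ (show (m : ℕ) < r - 1 by omega)]
        congr 1
        show y (ι m) = zfun d r ι y (m : ℕ)
        unfold zfun
        rw [dif_pos m.isLt]
    have hNlt : ∀ (i : Fin (d + 1)) (m : Fin r), (i : ℕ) < ((ι m : Fin (d + 1)) : ℕ) →
        ‖Pfun d r ι y ((Nidx d r ι hr i : Fin r) : ℕ)‖ ≤ ‖Pfun d r ι y (m : ℕ)‖ :=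
      fun i m h => hPmono (Fin.le_def.mp (Nidx_le hr i m h))
    have hjm : ∀ m : Fin r, j < ((ι m : Fin (d + 1)) : ℕ) := by
      intro m
      have h0m : ι ⟨0, hr⟩ ≤ ι m := hmono.monotone (Fin.le_def.mpr (Nat.zero_le _))
      have := Fin.le_def.mp h0m
      omega
    refine ⟨x, ?_, ?_⟩
    · rw [Sset, Set.mem_iInter]
      intro m
      constructor
      · intro l hl
        have hlm : (l : ℕ) < ((ι m : Fin (d + 1)) : ℕ) := by have := hjm m; omega
        rw [hxapp l, hxι m, norm_mul]
        have K1 : ‖y l‖ * ε < 1 := (lt_div_iff₀ hε).mp (hy.2.1 l hl)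
        have K2 := hNlt l m hlm
        have K3 := hPpos (m : ℕ)
        have K5 : (0 : ℝ) ≤ ‖y l‖ := norm_nonneg _
        nlinarith [mul_le_mul_of_nonneg_left K2 (mul_nonneg K5 (le_of_lt hε)),
          mul_lt_mul_of_pos_right K1 K3]
      · intro l hjl hlm
        rw [hxapp l, hxι m, norm_mul]
        have hmL : ((ι m : Fin (d + 1)) : ℕ) ≤ ((ι ⟨r - 1, by omega⟩ : Fin (d + 1)) : ℕ) :=
          Fin.le_def.mp (hmono.monotone (Fin.le_def.mpr
            (by have := m.isLt; show (m : ℕ) ≤ r - 1; omega)))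
        have K1 : ‖y l‖ < 1 :=
          Tset_norm_lt_one hr hmono hy l hjl (lt_of_lt_of_le hlm hmL)
        have K2 := hNlt l m hlm
        have K3 := hPpos (m : ℕ)
        nlinarith [mul_le_mul_of_nonneg_left K2 (norm_nonneg (y l)),
          mul_lt_mul_of_pos_right K1 K3]
    · funext i
      show x i / x (sig d r ι hr i) = y i
      rw [sig_eq_Nidx, hxι (Nidx d r ι hr i), hxapp i]
      exact mul_div_cancel_right₀ _ (hPne _)
  · -- Part 3: fibers are scalar orbits
    intro x hx x' hx'
    have hne := Sset_ne hε hx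
    have hne' := Sset_ne hε hx'
    constructor
    · intro hpsi
      refine ⟨x' (ι ⟨r - 1, by omega⟩) / x (ι ⟨r - 1, by omega⟩),
        div_ne_zero (hne' _) (hne _), ?_⟩
      funext i
      have hA := congrFun hpsi i
      simp only [psi, sig_eq_Nidx] at hA
      rw [div_eq_div_iff (hne _) (hne' _)] at hA
      have hB := ratio hε hr hmono hx hx' hpsi (Nidx d r ι hr i)
      show x' i = (x' (ι ⟨r - 1, by omega⟩) / x (ι ⟨r - 1, by omega⟩)) * x i
      rw [div_mul_eq_mul_div, eq_div_iff (hne ⟨r - 1, by omega⟩)]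
      apply mul_left_cancel₀ (hne (Nidx d r ι hr i))
      linear_combination (- x (ι ⟨r - 1, by omega⟩)) * hA + (- x i) * hB
    · rintro ⟨c, hc, rfl⟩
      funext i
      simp only [psi, Pi.smul_apply, smul_eq_mul]
      exact (mul_div_mul_left _ _ hc).symm


end Stmt4
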